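/- Let u = min(v₁, v₂) with v₁, v₂ C¹ on an open set Ω ⊆ ℝ^m, and let x₀ ∈ Ω with v₁(x₀) = v₂(x₀). Then the superdifferential of u at x₀ equals the segment [Dv₁(x₀), Dv₂(x₀)], i.e. D⁺u(x₀) = co{Dv₁(x₀), Dv₂(x₀)}. -/

import Mathlib

open scoped RealInnerProductSpace
open Filter Topology

private lemma quot_tendsto_aux {F : Type*} [NormedAddCommGroup F] [InnerProductSpace ℝ F]
    [CompleteSpace F]
    {f : F → ℝ} {x₀ : F} (hf : DifferentiableAt ℝ f x₀) :
    Filter.Tendsto (fun x => (f x - f x₀ - ⟪gradient f x₀, x - x₀⟫) / ‖x - x₀‖)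
      (nhdsWithin x₀ {x₀}ᶜ) (nhds 0) := by
  have h := hasGradientAt_iff_tendsto.1 hf.hasGradientAt
  have h2 : Tendsto (fun x => |(f x - f x₀ - ⟪gradient f x₀, x - x₀⟫) / ‖x - x₀‖|)
      (𝓝 x₀) (𝓝 0) := by
    convert h using 2 with x
    rw [abs_div, abs_norm, div_eq_inv_mul, Real.norm_eq_abs]
  exact (tendsto_zero_iff_abs_tendsto_zero _).2 (h2.mono_left nhdsWithin_le_nhds)

private lemma mem_segment_aux {F : Type*} [NormedAddCommGroup F] [InnerProductSpace ℝ F]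
    {g₁ g₂ p : F} (h : ∀ w, min ⟪g₁, w⟫ ⟪g₂, w⟫ ≤ ⟪p, w⟫) :
    p ∈ segment ℝ g₁ g₂ := by
  set v := g₁ - g₂ with hv
  set q := p - g₂ with hq
  have key : ∀ w, min ⟪v, w⟫ 0 ≤ ⟪q, w⟫ := by
    intro w
    have h1 : min (⟪g₁, w⟫ - ⟪g₂, w⟫) (⟪g₂, w⟫ - ⟪g₂, w⟫) ≤ ⟪p, w⟫ - ⟪g₂, w⟫ := by
      have := sub_le_sub_right (h w) (⟪g₂, w⟫ : ℝ)
      rw [← min_sub_sub_right] at this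
      exact this
    simpa [hv, hq, inner_sub_left] using h1
  by_cases hv0 : v = 0
  · have hq0 : q = 0 := by
      have h1 := key (-q)
      rw [hv0, inner_zero_left, min_self, inner_neg_right] at h1
      have : ⟪q, q⟫ = 0 := le_antisymm (by linarith) real_inner_self_nonneg
      exact inner_self_eq_zero.1 this
    have : p = g₂ := by rw [← sub_eq_zero]; exact hq0
    rw [this]; exact right_mem_segment ℝ g₁ g₂
  · have hvv : (0:ℝ) < ⟪v, v⟫ :=
      real_inner_self_nonneg.lt_of_ne (fun h => hv0 (inner_self_eq_zero.1 h.symm))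
    set t := ⟪q, v⟫ / ⟪v, v⟫ with ht
    set r := q - t • v with hr
    have hvr : ⟪v, r⟫ = 0 := by
      rw [hr, inner_sub_right, real_inner_smul_right, ht, real_inner_comm q v,
        div_mul_cancel₀ _ (ne_of_gt hvv), sub_self]
    have hr0 : r = 0 := by
      have h1 := key (-r)
      rw [inner_neg_right, inner_neg_right, hvr, neg_zero, min_self] at h1
      have hqr : ⟪q, r⟫ = ⟪r, r⟫ := by
        have : q = t • v + r := by rw [hr]; abel
        rw [this, inner_add_left, real_inner_smul_left, hvr,
          mul_zero, zero_add]
      have : ⟪r, r⟫ = 0 := le_antisymm (by linarith [hqr ▸ h1]) real_inner_self_nonneg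
      exact inner_self_eq_zero.1 this
    have hqv : q = t • v := by have := hr0; rw [hr, sub_eq_zero] at this; exact this
    have ht0 : 0 ≤ t := by
      have h1 := key v
      rw [hqv, real_inner_smul_left, min_eq_right hvv.le] at h1
      nlinarith
    have ht1 : t ≤ 1 := by
      have h1 := key (-v)
      rw [hqv, inner_neg_right, inner_neg_right, real_inner_smul_left,
        min_eq_left (by linarith)] at h1
      nlinarith
    refine ⟨t, 1 - t, ht0, by linarith, by ring, ?_⟩
    rw [hv, hq] at hqv
    have : p = g₂ + t • (g₁ - g₂) := by rw [← hqv]; abel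
    rw [this, smul_sub]
    module

set_option maxHeartbeats 1000000 in
theorem stmt_8 (m : ℕ) (Ω : Set (EuclideanSpace ℝ (Fin m))) (hΩ : IsOpen Ω)
    (v₁ v₂ : EuclideanSpace ℝ (Fin m) → ℝ)
    (hv₁ : ContDiffOn ℝ 1 v₁ Ω) (hv₂ : ContDiffOn ℝ 1 v₂ Ω)
    (x₀ : EuclideanSpace ℝ (Fin m)) (hx₀ : x₀ ∈ Ω)
    (heq : v₁ x₀ = v₂ x₀) :
    {p : EuclideanSpace ℝ (Fin m) |
        Filter.limsup
          (fun x => (min (v₁ x) (v₂ x) - min (v₁ x₀) (v₂ x₀) - ⟪p, x - x₀⟫) / ‖x - x₀‖)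
          (nhdsWithin x₀ {x₀}ᶜ) ≤ 0} =
      segment ℝ (gradient v₁ x₀) (gradient v₂ x₀) := by
  set g₁ := gradient v₁ x₀ with hg₁
  set g₂ := gradient v₂ x₀ with hg₂
  rcases subsingleton_or_nontrivial (EuclideanSpace ℝ (Fin m)) with hsub | hnt
  · -- degenerate case
    ext p
    simp only [Set.mem_setOf_eq]
    constructor
    · intro _
      have : p = g₁ := Subsingleton.elim _ _
      rw [this]; exact left_mem_segment ℝ g₁ g₂
    · intro _
      have hcompl : ({x₀}ᶜ : Set (EuclideanSpace ℝ (Fin m))) = ∅ := by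
        ext x; simp [Subsingleton.elim x x₀]
      rw [hcompl, nhdsWithin_empty]
      have : Filter.limsup
          (fun x => (min (v₁ x) (v₂ x) - min (v₁ x₀) (v₂ x₀) - ⟪p, x - x₀⟫) / ‖x - x₀‖)
          (⊥ : Filter (EuclideanSpace ℝ (Fin m))) = 0 := by
        rw [Filter.limsup_eq]
        have : {a : ℝ | ∀ᶠ x in (⊥ : Filter (EuclideanSpace ℝ (Fin m))),
            (min (v₁ x) (v₂ x) - min (v₁ x₀) (v₂ x₀) - ⟪p, x - x₀⟫) / ‖x - x₀‖ ≤ a} =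
            Set.univ := by
          ext a; simp
        rw [this]
        apply Real.sInf_of_not_bddBelow
        rintro ⟨b, hb⟩
        have := hb (Set.mem_univ (b - 1))
        linarith
      rw [this]
  · haveI : NeBot (𝓝[≠] x₀) := Module.punctured_nhds_neBot ℝ (EuclideanSpace ℝ (Fin m)) x₀
    have hd₁ : DifferentiableAt ℝ v₁ x₀ :=
      (hv₁.contDiffAt (hΩ.mem_nhds hx₀)).differentiableAt one_ne_zero
    have hd₂ : DifferentiableAt ℝ v₂ x₀ :=
      (hv₂.contDiffAt (hΩ.mem_nhds hx₀)).differentiableAt one_ne_zero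
    set q₁ : EuclideanSpace ℝ (Fin m) → ℝ := fun x => (v₁ x - v₁ x₀ - ⟪g₁, x - x₀⟫) / ‖x - x₀‖ with hq₁def
    set q₂ : EuclideanSpace ℝ (Fin m) → ℝ := fun x => (v₂ x - v₂ x₀ - ⟪g₂, x - x₀⟫) / ‖x - x₀‖ with hq₂def
    have hq₁ : Tendsto q₁ (𝓝[≠] x₀) (𝓝 0) := quot_tendsto_aux hd₁
    have hq₂ : Tendsto q₂ (𝓝[≠] x₀) (𝓝 0) := quot_tendsto_aux hd₂
    have Hnum : ∀ (p : (EuclideanSpace ℝ (Fin m))) (x : (EuclideanSpace ℝ (Fin m))),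
        min (v₁ x) (v₂ x) - min (v₁ x₀) (v₂ x₀) - ⟪p, x - x₀⟫
          = min (v₁ x - v₁ x₀ - ⟪p, x - x₀⟫) (v₂ x - v₂ x₀ - ⟪p, x - x₀⟫) := by
      intro p x
      have h1 : min (v₁ x₀) (v₂ x₀) = v₁ x₀ := min_eq_left heq.le
      rw [h1]
      have h2 : min (v₁ x - (v₁ x₀ + ⟪p, x - x₀⟫)) (v₂ x - (v₁ x₀ + ⟪p, x - x₀⟫))
          = min (v₁ x) (v₂ x) - (v₁ x₀ + ⟪p, x - x₀⟫) := min_sub_sub_right _ _ _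
      rw [show min (v₁ x) (v₂ x) - v₁ x₀ - ⟪p, x - x₀⟫
          = min (v₁ x) (v₂ x) - (v₁ x₀ + ⟪p, x - x₀⟫) by ring, ← h2]
      congr 1
      · ring
      · rw [heq]; ring
    -- upper bound pointwise
    have hub : ∀ (p : (EuclideanSpace ℝ (Fin m))) (x : (EuclideanSpace ℝ (Fin m))), x ≠ x₀ →
        (min (v₁ x) (v₂ x) - min (v₁ x₀) (v₂ x₀) - ⟪p, x - x₀⟫) / ‖x - x₀‖
          ≤ q₁ x + ‖g₁ - p‖ := by
      intro p x hx
      have hd : (0:ℝ) < ‖x - x₀‖ := norm_pos_iff.2 (sub_ne_zero_of_ne hx)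
      rw [Hnum]
      have h1 : min (v₁ x - v₁ x₀ - ⟪p, x - x₀⟫) (v₂ x - v₂ x₀ - ⟪p, x - x₀⟫)
          ≤ (v₁ x - v₁ x₀ - ⟪g₁, x - x₀⟫) + ‖g₁ - p‖ * ‖x - x₀‖ := by
        have h2 : v₁ x - v₁ x₀ - ⟪p, x - x₀⟫
            = (v₁ x - v₁ x₀ - ⟪g₁, x - x₀⟫) + ⟪g₁ - p, x - x₀⟫ := by
          rw [inner_sub_left]; ring
        calc min (v₁ x - v₁ x₀ - ⟪p, x - x₀⟫) (v₂ x - v₂ x₀ - ⟪p, x - x₀⟫)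
            ≤ v₁ x - v₁ x₀ - ⟪p, x - x₀⟫ := min_le_left _ _
          _ ≤ _ := by rw [h2]; gcongr; exact real_inner_le_norm _ _
      calc min (v₁ x - v₁ x₀ - ⟪p, x - x₀⟫) (v₂ x - v₂ x₀ - ⟪p, x - x₀⟫) / ‖x - x₀‖
          ≤ ((v₁ x - v₁ x₀ - ⟪g₁, x - x₀⟫) + ‖g₁ - p‖ * ‖x - x₀‖) / ‖x - x₀‖ := by gcongr
        _ = q₁ x + ‖g₁ - p‖ := by
            rw [hq₁def, add_div, mul_div_assoc, div_self hd.ne', mul_one]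
    -- lower bound pointwise
    have hlb : ∀ (p : (EuclideanSpace ℝ (Fin m))) (x : (EuclideanSpace ℝ (Fin m))), x ≠ x₀ →
        min (q₁ x) (q₂ x) - (‖g₁ - p‖ + ‖g₂ - p‖)
          ≤ (min (v₁ x) (v₂ x) - min (v₁ x₀) (v₂ x₀) - ⟪p, x - x₀⟫) / ‖x - x₀‖ := by
      intro p x hx
      have hd : (0:ℝ) < ‖x - x₀‖ := norm_pos_iff.2 (sub_ne_zero_of_ne hx)
      rw [Hnum]
      have key : ∀ (g : (EuclideanSpace ℝ (Fin m))), (v₁ x - v₁ x₀ - ⟪g, x - x₀⟫) - ‖g - p‖ * ‖x - x₀‖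
          ≤ v₁ x - v₁ x₀ - ⟪p, x - x₀⟫ → True := fun _ _ => trivial
      rcases le_total (v₁ x - v₁ x₀ - ⟪p, x - x₀⟫) (v₂ x - v₂ x₀ - ⟪p, x - x₀⟫) with hc | hc
      · rw [min_eq_left hc]
        have h2 : (v₁ x - v₁ x₀ - ⟪g₁, x - x₀⟫) - ‖g₁ - p‖ * ‖x - x₀‖
            ≤ v₁ x - v₁ x₀ - ⟪p, x - x₀⟫ := by
          have h3 : -(‖g₁ - p‖ * ‖x - x₀‖) ≤ ⟪g₁ - p, x - x₀⟫ :=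
            neg_le_of_abs_le (abs_real_inner_le_norm _ _)
          rw [inner_sub_left] at h3; linarith
        calc min (q₁ x) (q₂ x) - (‖g₁ - p‖ + ‖g₂ - p‖)
            ≤ q₁ x - ‖g₁ - p‖ := by
              have := min_le_left (q₁ x) (q₂ x)
              have : (0:ℝ) ≤ ‖g₂ - p‖ := norm_nonneg _
              linarith [min_le_left (q₁ x) (q₂ x)]
          _ = ((v₁ x - v₁ x₀ - ⟪g₁, x - x₀⟫) - ‖g₁ - p‖ * ‖x - x₀‖) / ‖x - x₀‖ := by
              rw [hq₁def, sub_div, mul_div_assoc, div_self hd.ne', mul_one]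
          _ ≤ _ := by gcongr
      · rw [min_eq_right hc]
        have h2 : (v₂ x - v₂ x₀ - ⟪g₂, x - x₀⟫) - ‖g₂ - p‖ * ‖x - x₀‖
            ≤ v₂ x - v₂ x₀ - ⟪p, x - x₀⟫ := by
          have h3 : -(‖g₂ - p‖ * ‖x - x₀‖) ≤ ⟪g₂ - p, x - x₀⟫ :=
            neg_le_of_abs_le (abs_real_inner_le_norm _ _)
          rw [inner_sub_left] at h3; linarith
        calc min (q₁ x) (q₂ x) - (‖g₁ - p‖ + ‖g₂ - p‖)
            ≤ q₂ x - ‖g₂ - p‖ := by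
              have : (0:ℝ) ≤ ‖g₁ - p‖ := norm_nonneg _
              linarith [min_le_right (q₁ x) (q₂ x)]
          _ = ((v₂ x - v₂ x₀ - ⟪g₂, x - x₀⟫) - ‖g₂ - p‖ * ‖x - x₀‖) / ‖x - x₀‖ := by
              rw [hq₂def, sub_div, mul_div_assoc, div_self hd.ne', mul_one]
          _ ≤ _ := by gcongr
    ext p
    simp only [Set.mem_setOf_eq]
    constructor
    · -- ⊆ : superdifferential is inside segment
      intro hlim
      apply mem_segment_aux
      intro w
      by_cases hw : w = 0
      · simp [hw]
      have hwn : (0:ℝ) < ‖w‖ := norm_pos_iff.2 hw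
      -- bounded above
      have hbd : IsBoundedUnder (· ≤ ·) (𝓝[≠] x₀)
          (fun x => (min (v₁ x) (v₂ x) - min (v₁ x₀) (v₂ x₀) - ⟪p, x - x₀⟫) / ‖x - x₀‖) := by
        refine ⟨1 + ‖g₁ - p‖, ?_⟩
        rw [Filter.eventually_map]
        filter_upwards [hq₁.eventually_le_const (by norm_num : (0:ℝ) < 1),
          eventually_mem_nhdsWithin] with x h1 hmem
        exact le_trans (hub p x hmem) (by linarith)
      rw [show ⟪p, w⟫ = ⟪p, w⟫ + 0 by ring]
      apply le_of_forall_sub_le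
      intro ε hε
      set ε' := ε / (2 * ‖w‖) with hε'
      have hε'pos : 0 < ε' := by positivity
      have hev : ∀ᶠ x in 𝓝[≠] x₀,
          (min (v₁ x) (v₂ x) - min (v₁ x₀) (v₂ x₀) - ⟪p, x - x₀⟫) / ‖x - x₀‖ < ε' :=
        Filter.eventually_lt_of_limsup_lt (lt_of_le_of_lt hlim hε'pos) hbd
      have hev₁ : ∀ᶠ x in 𝓝[≠] x₀, -ε' < q₁ x :=
        hq₁.eventually_const_lt (by linarith)
      have hev₂ : ∀ᶠ x in 𝓝[≠] x₀, -ε' < q₂ x :=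
        hq₂.eventually_const_lt (by linarith)
      -- path t ↦ x₀ + t • w
      have hpath : Tendsto (fun t : ℝ => x₀ + t • w) (𝓝[>] (0:ℝ)) (𝓝[≠] x₀) := by
        rw [tendsto_nhdsWithin_iff]
        constructor
        · have hc : Continuous (fun t : ℝ => x₀ + t • w) := by fun_prop
          have h0 : Tendsto (fun t : ℝ => x₀ + t • w) (𝓝 (0:ℝ)) (𝓝 x₀) := by
            have := hc.tendsto (0:ℝ)
            simpa using this
          exact h0.mono_left nhdsWithin_le_nhds
        · filter_upwards [self_mem_nhdsWithin] with t ht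
          simp only [Set.mem_compl_iff, Set.mem_singleton_iff]
          intro hcon
          have : t • w = 0 := by
            have := congrArg (fun y => y - x₀) hcon
            simpa using this
          exact hw ((smul_eq_zero.1 this).resolve_left (ne_of_gt ht))
      have hcomb : ∀ᶠ t in 𝓝[>] (0:ℝ), (0 < t ∧
          ((min (v₁ (x₀ + t • w)) (v₂ (x₀ + t • w)) - min (v₁ x₀) (v₂ x₀)
            - ⟪p, (x₀ + t • w) - x₀⟫) / ‖(x₀ + t • w) - x₀‖ < ε'
          ∧ -ε' < q₁ (x₀ + t • w) ∧ -ε' < q₂ (x₀ + t • w))) := by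
        filter_upwards [self_mem_nhdsWithin,
          hpath.eventually (hev.and (hev₁.and hev₂))] with t ht h2
        exact ⟨ht, h2.1, h2.2.1, h2.2.2⟩
      obtain ⟨t, ht, hH, hA₁, hA₂⟩ := hcomb.exists
      set x := x₀ + t • w with hxdef
      have hdx : x - x₀ = t • w := by rw [hxdef]; abel
      have hnx : ‖x - x₀‖ = t * ‖w‖ := by
        rw [hdx, norm_smul, Real.norm_eq_abs, abs_of_pos ht]
      have hdpos : (0:ℝ) < ‖x - x₀‖ := by rw [hnx]; positivity
      -- numerators
      rw [Hnum] at hH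
      have hHnum : min (v₁ x - v₁ x₀ - ⟪p, x - x₀⟫) (v₂ x - v₂ x₀ - ⟪p, x - x₀⟫)
          < ε' * ‖x - x₀‖ := (div_lt_iff₀ hdpos).1 hH
      have hA₁' : -(ε' * ‖x - x₀‖) < v₁ x - v₁ x₀ - ⟪g₁, x - x₀⟫ := by
        have := (lt_div_iff₀ hdpos).1 hA₁
        linarith
      have hA₂' : -(ε' * ‖x - x₀‖) < v₂ x - v₂ x₀ - ⟪g₂, x - x₀⟫ := by
        have := (lt_div_iff₀ hdpos).1 hA₂
        linarith
      have hip : ∀ g : (EuclideanSpace ℝ (Fin m)), ⟪g, x - x₀⟫ = t * ⟪g, w⟫ := by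
        intro g; rw [hdx, real_inner_smul_right]
      have h2ε : 2 * ε' * ‖w‖ = ε := by
        rw [hε']; field_simp
      rcases le_total (v₁ x - v₁ x₀ - ⟪p, x - x₀⟫) (v₂ x - v₂ x₀ - ⟪p, x - x₀⟫) with hc | hc
      · rw [min_eq_left hc] at hHnum
        have hkey : t * ⟪g₁, w⟫ - t * ⟪p, w⟫ < 2 * ε' * (t * ‖w‖) := by
          rw [← hip, ← hip, ← hnx]; linarith
        have : ⟪g₁, w⟫ - ⟪p, w⟫ < 2 * ε' * ‖w‖ := by
          have h5 : t * (⟪g₁, w⟫ - ⟪p, w⟫) < t * (2 * ε' * ‖w‖) := by ring_nf; ring_nf at hkey; linarith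
          exact lt_of_mul_lt_mul_left (by linarith [h5]) ht.le
        calc min ⟪g₁, w⟫ ⟪g₂, w⟫ - ε ≤ ⟪g₁, w⟫ - ε := by linarith [min_le_left (⟪g₁, w⟫:ℝ) ⟪g₂, w⟫]
          _ ≤ ⟪p, w⟫ + 0 := by rw [← h2ε]; linarith
      · rw [min_eq_right hc] at hHnum
        have hkey : t * ⟪g₂, w⟫ - t * ⟪p, w⟫ < 2 * ε' * (t * ‖w‖) := by
          rw [← hip, ← hip, ← hnx]; linarith
        have : ⟪g₂, w⟫ - ⟪p, w⟫ < 2 * ε' * ‖w‖ := by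
          have h5 : t * (⟪g₂, w⟫ - ⟪p, w⟫) < t * (2 * ε' * ‖w‖) := by ring_nf; ring_nf at hkey; linarith
          exact lt_of_mul_lt_mul_left (by linarith [h5]) ht.le
        calc min ⟪g₁, w⟫ ⟪g₂, w⟫ - ε ≤ ⟪g₂, w⟫ - ε := by linarith [min_le_right (⟪g₁, w⟫:ℝ) ⟪g₂, w⟫]
          _ ≤ ⟪p, w⟫ + 0 := by rw [← h2ε]; linarith
    · -- ⊇ : segment is inside superdifferential
      rintro ⟨a, b, ha, hb, hab, hp⟩
      -- pointwise bound
      have hpt : ∀ x : (EuclideanSpace ℝ (Fin m)), x ≠ x₀ →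
          (min (v₁ x) (v₂ x) - min (v₁ x₀) (v₂ x₀) - ⟪p, x - x₀⟫) / ‖x - x₀‖
            ≤ a * q₁ x + b * q₂ x := by
        intro x hx
        have hd : (0:ℝ) < ‖x - x₀‖ := norm_pos_iff.2 (sub_ne_zero_of_ne hx)
        rw [Hnum]
        have hipp : ⟪p, x - x₀⟫ = a * ⟪g₁, x - x₀⟫ + b * ⟪g₂, x - x₀⟫ := by
          rw [← hp, inner_add_left, real_inner_smul_left, real_inner_smul_left]
        have hnum : min (v₁ x - v₁ x₀ - ⟪p, x - x₀⟫) (v₂ x - v₂ x₀ - ⟪p, x - x₀⟫)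
            ≤ a * (v₁ x - v₁ x₀ - ⟪g₁, x - x₀⟫) + b * (v₂ x - v₂ x₀ - ⟪g₂, x - x₀⟫) := by
          have h1 := min_le_left (v₁ x - v₁ x₀ - ⟪p, x - x₀⟫) (v₂ x - v₂ x₀ - ⟪p, x - x₀⟫)
          have h2 := min_le_right (v₁ x - v₁ x₀ - ⟪p, x - x₀⟫) (v₂ x - v₂ x₀ - ⟪p, x - x₀⟫)
          have h3 := add_le_add (mul_le_mul_of_nonneg_left h1 ha) (mul_le_mul_of_nonneg_left h2 hb)
          have h4 : a * min (v₁ x - v₁ x₀ - ⟪p, x - x₀⟫) (v₂ x - v₂ x₀ - ⟪p, x - x₀⟫)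
              + b * min (v₁ x - v₁ x₀ - ⟪p, x - x₀⟫) (v₂ x - v₂ x₀ - ⟪p, x - x₀⟫)
              = min (v₁ x - v₁ x₀ - ⟪p, x - x₀⟫) (v₂ x - v₂ x₀ - ⟪p, x - x₀⟫) := by
            rw [← add_mul, hab, one_mul]
          have h5 : a * (v₁ x - v₁ x₀ - ⟪p, x - x₀⟫) + b * (v₂ x - v₂ x₀ - ⟪p, x - x₀⟫)
              = a * (v₁ x - v₁ x₀ - ⟪g₁, x - x₀⟫) + b * (v₂ x - v₂ x₀ - ⟪g₂, x - x₀⟫) := by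
            linear_combination (-(⟪p, x - x₀⟫ : ℝ)) * hab - hipp
          linarith
        calc min (v₁ x - v₁ x₀ - ⟪p, x - x₀⟫) (v₂ x - v₂ x₀ - ⟪p, x - x₀⟫) / ‖x - x₀‖
            ≤ (a * (v₁ x - v₁ x₀ - ⟪g₁, x - x₀⟫) + b * (v₂ x - v₂ x₀ - ⟪g₂, x - x₀⟫)) / ‖x - x₀‖ := by
              gcongr
          _ = a * q₁ x + b * q₂ x := by
              simp only [hq₁def, hq₂def]
              field_simp
      have hcb : IsCoboundedUnder (· ≤ ·) (𝓝[≠] x₀)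
          (fun x => (min (v₁ x) (v₂ x) - min (v₁ x₀) (v₂ x₀) - ⟪p, x - x₀⟫) / ‖x - x₀‖) := by
        apply Filter.isCoboundedUnder_le_of_eventually_le (𝓝[≠] x₀)
          (x := -1 - (‖g₁ - p‖ + ‖g₂ - p‖))
        have hminT : Tendsto (fun x => min (q₁ x) (q₂ x)) (𝓝[≠] x₀) (𝓝 0) := by
          have h := hq₁.min hq₂
          rwa [min_self] at h
        filter_upwards [eventually_mem_nhdsWithin,
          hminT.eventually_const_lt (by norm_num : (-1:ℝ) < 0)] with x hmem h1
        have h2 := hlb p x hmem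
        have : (-1:ℝ) - (‖g₁ - p‖ + ‖g₂ - p‖) ≤ min (q₁ x) (q₂ x) - (‖g₁ - p‖ + ‖g₂ - p‖) := by
          linarith
        linarith
      apply le_of_forall_sub_le
      intro ε hε
      have : Filter.limsup
          (fun x => (min (v₁ x) (v₂ x) - min (v₁ x₀) (v₂ x₀) - ⟪p, x - x₀⟫) / ‖x - x₀‖)
          (𝓝[≠] x₀) ≤ ε := by
        apply Filter.limsup_le_of_le hcb
        have htend : Tendsto (fun x => a * q₁ x + b * q₂ x) (𝓝[≠] x₀) (𝓝 0) := by
          have h := (hq₁.const_mul a).add (hq₂.const_mul b)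
          norm_num at h
          exact h
        filter_upwards [eventually_mem_nhdsWithin,
          htend.eventually_le_const hε] with x hmem h1
        exact le_trans (hpt x hmem) h1
      linarith
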